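/- Fix a natural number δ. For every finite connected non-regular graph H (loops allowed) there exists a constant ℓ > δ (depending on δ and H) such that for all k ≥ ℓ, hom(P_k, H) < Δ^{k−δ}, where Δ is the maximum degree of H. -/

import Mathlib

/-- The number of `H`-colorings of a simple graph `G`, where the target graph (with loops
allowed) is given by a symmetric adjacency relation `H` on its vertex type. -/
noncomputable def homCount {α β : Type*} (G : SimpleGraph α) (H : β → β → Prop) : ℕ :=
  Nat.card {f : α → β // ∀ ⦃u v⦄, G.Adj u v → H (f u) (f v)}

/-- The degree of a vertex in a graph with loops allowed (a loop adds one to the degree). -/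
noncomputable def relDegree {β : Type*} (H : β → β → Prop) (v : β) : ℕ :=
  Nat.card {w : β // H v w}

/-- The maximum degree of a finite graph with loops allowed. -/
noncomputable def relMaxDegree {β : Type*} [Fintype β] (H : β → β → Prop) : ℕ :=
  Finset.univ.sup fun v => relDegree H v

namespace HomCountAux

variable {β : Type*} [Fintype β]

open Classical in
/-- neighbours of `v` -/
noncomputable def nbr (H : β → β → Prop) (v : β) : Finset β := Finset.univ.filter (H v)

lemma mem_nbr {H : β → β → Prop} {v w : β} : w ∈ nbr H v ↔ H v w := by
  classical
  simp [nbr]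

lemma relDegree_eq (H : β → β → Prop) (v : β) : relDegree H v = (nbr H v).card := by
  classical
  rw [relDegree, Nat.card_eq_fintype_card, Fintype.card_subtype]
  congr 1

/-- number of walks of length `n` starting at `v` -/
noncomputable def W (H : β → β → Prop) : ℕ → β → ℕ := fun n =>
  Nat.rec (fun _ => 1) (fun _ ih v => ∑ w ∈ nbr H v, ih w) n

lemma W_zero (H : β → β → Prop) (v : β) : W H 0 v = 1 := rfl

lemma W_succ (H : β → β → Prop) (n : ℕ) (v : β) :
    W H (n + 1) v = ∑ w ∈ nbr H v, W H n w := rfl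

lemma W_le_pow (H : β → β → Prop) {Δ : ℕ} (hD : ∀ v, (nbr H v).card ≤ Δ) :
    ∀ (n : ℕ) (v : β), W H n v ≤ Δ ^ n := by
  intro n
  induction n with
  | zero => intro v; simp [W_zero]
  | succ n ih =>
    intro v
    rw [W_succ]
    calc ∑ w ∈ nbr H v, W H n w ≤ ∑ _w ∈ nbr H v, Δ ^ n := Finset.sum_le_sum fun w _ => ih w
      _ = (nbr H v).card * Δ ^ n := by rw [Finset.sum_const, smul_eq_mul]
      _ ≤ Δ * Δ ^ n := Nat.mul_le_mul_right _ (hD v)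
      _ = Δ ^ (n + 1) := by ring

lemma W_strict (H : β → β → Prop) {Δ : ℕ} (hD : ∀ v, (nbr H v).card ≤ Δ) {v0 : β}
    (hv0 : (nbr H v0).card < Δ) :
    ∀ (l : List β) (u : β) (m : ℕ), List.Chain H u l →
      (u :: l).getLast (List.cons_ne_nil _ _) = v0 → l.length < m → W H m u + 1 ≤ Δ ^ m := by
  classical
  intro l
  induction l with
  | nil =>
    intro u m _ hlast hm
    obtain ⟨m', rfl⟩ : ∃ m', m = m' + 1 := ⟨m - 1, by omega⟩
    have hu : u = v0 := by simpa using hlast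
    subst hu
    rw [W_succ]
    have h1 : ∑ w ∈ nbr H u, W H m' w ≤ (nbr H u).card * Δ ^ m' := by
      calc ∑ w ∈ nbr H u, W H m' w ≤ ∑ _w ∈ nbr H u, Δ ^ m' :=
            Finset.sum_le_sum fun w _ => W_le_pow H hD m' w
        _ = _ := by rw [Finset.sum_const, smul_eq_mul]
    have h2 : (nbr H u).card * Δ ^ m' + Δ ^ m' ≤ Δ ^ (m' + 1) := by
      calc (nbr H u).card * Δ ^ m' + Δ ^ m' = ((nbr H u).card + 1) * Δ ^ m' := by ring
        _ ≤ Δ * Δ ^ m' := Nat.mul_le_mul_right _ (by omega)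
        _ = Δ ^ (m' + 1) := by ring
    have h3 : 1 ≤ Δ ^ m' := Nat.one_le_pow _ _ (by omega)
    omega
  | cons x l' ih =>
    intro u m hchain hlast hm
    obtain ⟨m', rfl⟩ : ∃ m', m = m' + 1 := ⟨m - 1, by omega⟩
    rw [show List.Chain H u (x :: l') = List.IsChain H (u :: x :: l') from rfl, List.chain_cons] at hchain
    have hlast' : (x :: l').getLast (List.cons_ne_nil _ _) = v0 := by
      rwa [List.getLast_cons_cons] at hlast
    have hx : x ∈ nbr H u := mem_nbr.2 hchain.1
    have hml : l'.length < m' := by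
      simp only [List.length_cons] at hm
      omega
    have hih : W H m' x + 1 ≤ Δ ^ m' := ih x m' hchain.2 hlast' hml
    rw [W_succ]
    have hsplit : ∑ w ∈ (nbr H u).erase x, W H m' w + W H m' x = ∑ w ∈ nbr H u, W H m' w :=
      Finset.sum_erase_add _ _ hx
    have h1 : ∑ w ∈ (nbr H u).erase x, W H m' w ≤ ((nbr H u).card - 1) * Δ ^ m' := by
      calc ∑ w ∈ (nbr H u).erase x, W H m' w ≤ ∑ _w ∈ (nbr H u).erase x, Δ ^ m' :=
            Finset.sum_le_sum fun w _ => W_le_pow H hD m' w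
        _ = ((nbr H u).erase x).card * Δ ^ m' := by rw [Finset.sum_const, smul_eq_mul]
        _ = _ := by rw [Finset.card_erase_of_mem hx]
    have hc1 : 1 ≤ (nbr H u).card := Finset.card_pos.2 ⟨x, hx⟩
    have h2 : ((nbr H u).card - 1) * Δ ^ m' + Δ ^ m' ≤ Δ ^ (m' + 1) := by
      have hcard : ((nbr H u).card - 1) + 1 ≤ Δ := by have := hD u; omega
      calc ((nbr H u).card - 1) * Δ ^ m' + Δ ^ m'
          = (((nbr H u).card - 1) + 1) * Δ ^ m' := by ring
        _ ≤ Δ * Δ ^ m' := Nat.mul_le_mul_right _ hcard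
        _ = Δ ^ (m' + 1) := by ring
    omega

lemma W_add (H : β → β → Prop) {m B : ℕ} (hB : ∀ w, W H m w ≤ B) :
    ∀ (j : ℕ) (v : β), W H (j + m) v ≤ W H j v * B := by
  intro j
  induction j with
  | zero => intro v; simpa [W_zero] using hB v
  | succ j ih =>
    intro v
    have h : j + 1 + m = (j + m) + 1 := by omega
    rw [h, W_succ, W_succ, Finset.sum_mul]
    exact Finset.sum_le_sum fun w _ => ih w

lemma W_blocks (H : β → β → Prop) {m B : ℕ} (hB : ∀ w, W H m w ≤ B) (r : ℕ) :
    ∀ (a : ℕ) (v : β), W H (r + a * m) v ≤ W H r v * B ^ a := by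
  intro a
  induction a with
  | zero => intro v; simp
  | succ a ih =>
    intro v
    have h : r + (a + 1) * m = (r + a * m) + m := by ring
    rw [h]
    calc W H ((r + a * m) + m) v ≤ W H (r + a * m) v * B := W_add H hB _ v
      _ ≤ (W H r v * B ^ a) * B := Nat.mul_le_mul_right _ (ih v)
      _ = W H r v * B ^ (a + 1) := by ring

open Classical in
noncomputable def wfrom (H : β → β → Prop) (n : ℕ) (v : β) : Finset (Fin (n + 1) → β) :=
  Finset.univ.filter (fun f => f 0 = v ∧ ∀ i : Fin n, H (f i.castSucc) (f i.succ))

lemma mem_wfrom {H : β → β → Prop} {n : ℕ} {v : β} {f : Fin (n + 1) → β} :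
    f ∈ wfrom H n v ↔ f 0 = v ∧ ∀ i : Fin n, H (f i.castSucc) (f i.succ) := by
  classical
  simp [wfrom]

lemma wfrom_card_le_W (H : β → β → Prop) : ∀ (n : ℕ) (v : β), (wfrom H n v).card ≤ W H n v := by
  classical
  intro n
  induction n with
  | zero =>
    intro v
    rw [W_zero]
    apply Finset.card_le_one.2
    intro f hf g hg
    rw [mem_wfrom] at hf hg
    funext i
    have hi := i.isLt
    have : i = 0 := Fin.ext (by omega)
    rw [this, hf.1, hg.1]
  | succ n ih =>
    intro v
    rw [W_succ]
    calc (wfrom H (n + 1) v).card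
        ≤ ((nbr H v).biUnion (fun w => wfrom H n w)).card := by
          apply Finset.card_le_card_of_injOn
            (fun f : Fin (n + 1 + 1) → β => (Fin.tail f : Fin (n + 1) → β))
          · intro f hf
            rw [Finset.mem_coe, mem_wfrom] at hf
            refine Finset.mem_biUnion.2 ⟨f 1, ?_, ?_⟩
            · rw [mem_nbr]
              have h0 := hf.2 0
              simpa [hf.1] using h0
            · rw [mem_wfrom]
              refine ⟨rfl, fun i => ?_⟩
              have h := hf.2 i.succ
              simpa [Fin.tail, ← Fin.succ_castSucc] using h
          · intro f hf g hg h
            rw [Finset.mem_coe, mem_wfrom] at hf hg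
            have h' : Fin.tail f = Fin.tail g := h
            have hfg : Fin.cons (f 0) (Fin.tail f) = Fin.cons (g 0) (Fin.tail g) := by
              rw [hf.1, hg.1, h']
            simpa [Fin.cons_self_tail] using hfg
      _ ≤ ∑ w ∈ nbr H v, (wfrom H n w).card := Finset.card_biUnion_le
      _ ≤ ∑ w ∈ nbr H v, W H n w := Finset.sum_le_sum fun w _ => ih w

lemma homCount_le (H : β → β → Prop) (n : ℕ) :
    homCount (SimpleGraph.pathGraph (n + 1)) H ≤ ∑ v, W H n v := by
  classical
  have key : ∀ f : Fin (n + 1) → β,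
      (∀ ⦃u v⦄, (SimpleGraph.pathGraph (n + 1)).Adj u v → H (f u) (f v)) →
      f ∈ Finset.univ.biUnion (fun v : β => wfrom H n v) := by
    intro f hf
    refine Finset.mem_biUnion.2 ⟨f 0, Finset.mem_univ _, ?_⟩
    rw [mem_wfrom]
    refine ⟨rfl, fun i => hf ?_⟩
    rw [SimpleGraph.pathGraph_adj]
    left
    simp
  rw [homCount, Nat.card_eq_fintype_card]
  calc Fintype.card {f : Fin (n + 1) → β //
        ∀ ⦃u v⦄, (SimpleGraph.pathGraph (n + 1)).Adj u v → H (f u) (f v)}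
      ≤ (Finset.univ.biUnion (fun v : β => wfrom H n v)).card := by
        rw [← Fintype.card_coe]
        exact Fintype.card_le_of_injective (fun f => ⟨f.1, key f.1 f.2⟩) (by
          intro f g h
          injection h with h'
          exact Subtype.ext h')
    _ ≤ ∑ v, (wfrom H n v).card := Finset.card_biUnion_le
    _ ≤ ∑ v, W H n v := Finset.sum_le_sum fun v _ => wfrom_card_le_W H n v

lemma binom (x : ℕ) : ∀ a : ℕ, x ^ (a + 1) + (a + 1) * x ^ a ≤ (x + 1) ^ (a + 1) := by
  intro a
  induction a with
  | zero => simp [pow_succ]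
  | succ a ih =>
    have h : (x + 1) ^ (a + 1 + 1) = (x + 1) ^ (a + 1) * (x + 1) := by ring
    rw [h]
    have h2 : (x ^ (a + 1) + (a + 1) * x ^ a) * (x + 1) ≤ (x + 1) ^ (a + 1) * (x + 1) :=
      Nat.mul_le_mul_right _ ih
    refine le_trans ?_ h2
    have hexp : (x ^ (a + 1) + (a + 1) * x ^ a) * (x + 1)
        = (x ^ (a + 1 + 1) + (a + 1 + 1) * x ^ (a + 1)) + (a + 1) * x ^ a := by
      rw [pow_succ x (a + 1), pow_succ x a]; ring
    rw [hexp]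
    exact Nat.le_add_right _ _

end HomCountAux

open HomCountAux in
/-- Fix `δ`.  For every finite connected non-regular graph `H` (loops allowed) there is a
constant `ℓ > δ` such that for all `k ≥ ℓ` we have `hom(P_k, H) < Δ^{k-δ}`, where `Δ` is the
maximum degree of `H`. -/
theorem homCount_pathGraph_lt {β : Type*} [Fintype β] (δ : ℕ)
    (H : β → β → Prop) (hSymm : Symmetric H)
    (hConn : ∀ u v : β, Relation.ReflTransGen H u v)
    (hNonReg : ∃ v w : β, relDegree H v ≠ relDegree H w) :
    ∃ ℓ : ℕ, δ < ℓ ∧ ∀ k : ℕ, ℓ ≤ k →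
      homCount (SimpleGraph.pathGraph k) H < relMaxDegree H ^ (k - δ) := by
  classical
  set Δ := relMaxDegree H with hΔdef
  have hdeg_le : ∀ u : β, relDegree H u ≤ Δ := fun u => Finset.le_sup (Finset.mem_univ u)
  -- every vertex has a neighbour
  have hdeg1 : ∀ u : β, 1 ≤ (nbr H u).card := by
    intro u
    obtain ⟨v, w, hvw⟩ := hNonReg
    have hne : ∃ z : β, z ≠ u := by
      by_cases h : v = u
      · exact ⟨w, fun hw => hvw (by rw [h, hw])⟩
      · exact ⟨v, h⟩
    obtain ⟨z, hz⟩ := hne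
    obtain ⟨l, hl, hlast⟩ := List.exists_isChain_cons_of_relationReflTransGen (hConn u z)
    cases l with
    | nil =>
      simp only [List.getLast_singleton] at hlast
      exact absurd hlast (fun h => hz h.symm)
    | cons x l' =>
      have hx : x ∈ nbr H u := mem_nbr.2 (List.chain_cons.1 hl).1
      exact Finset.card_pos.2 ⟨x, hx⟩
  have hcard_le : ∀ u : β, (nbr H u).card ≤ Δ := by
    intro u; rw [← relDegree_eq]; exact hdeg_le u
  -- a vertex of non-maximal degree
  obtain ⟨v, w, hvw⟩ := hNonReg
  have hv0 : ∃ v0 : β, (nbr H v0).card < Δ := by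
    rcases lt_or_gt_of_ne hvw with h | h
    · exact ⟨v, by rw [← relDegree_eq]; exact lt_of_lt_of_le h (hdeg_le w)⟩
    · exact ⟨w, by rw [← relDegree_eq]; exact lt_of_lt_of_le h (hdeg_le v)⟩
  obtain ⟨v0, hv0⟩ := hv0
  have hΔ2 : 2 ≤ Δ := by have := hdeg1 v0; omega
  -- chains to v0
  have hch : ∀ u : β, ∃ l : List β, List.Chain H u l ∧
      (u :: l).getLast (List.cons_ne_nil _ _) = v0 :=
    fun u => List.exists_isChain_cons_of_relationReflTransGen (hConn u v0)
  choose L hL1 hL2 using hch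
  set D := Finset.univ.sup (fun u : β => (L u).length) with hDdef
  set m := D + 1 with hmdef
  have hWm : ∀ u : β, W H m u + 1 ≤ Δ ^ m := by
    intro u
    refine W_strict H hcard_le hv0 (L u) u m (hL1 u) (hL2 u) ?_
    have : (L u).length ≤ D :=
      Finset.le_sup (f := fun u : β => (L u).length) (Finset.mem_univ u)
    omega
  set t := Δ ^ m with htdef
  have ht2 : 2 ≤ t := le_trans hΔ2 (Nat.le_self_pow (by omega) Δ)
  set B := t - 1 with hBdef
  have hBt : B + 1 = t := Nat.sub_add_cancel (by omega)
  have hB1 : 1 ≤ B := Nat.le_sub_one_of_lt (by omega)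
  have hB : ∀ u : β, W H m u ≤ B := by intro u; have := hWm u; omega
  set K := Fintype.card β * Δ ^ δ with hKdef
  have hK1 : 1 ≤ K := by
    have h1 : 1 ≤ Fintype.card β := Fintype.card_pos_iff.2 ⟨v0⟩
    have h2 : 1 ≤ Δ ^ δ := Nat.one_le_pow _ _ (by omega)
    have := Nat.mul_le_mul h1 h2
    simpa using this
  -- key inequality
  have hkey : ∀ a : ℕ, K * t ≤ a → K * B ^ a < t ^ a := by
    intro a ha
    have ha1 : 1 ≤ a :=
      le_trans (Nat.one_le_iff_ne_zero.2 (Nat.mul_ne_zero (by omega) (by omega))) ha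
    obtain ⟨a', rfl⟩ : ∃ a', a = a' + 1 := ⟨a - 1, by omega⟩
    have hb := binom B a'
    rw [hBt] at hb
    have hBp : 1 ≤ B ^ a' := Nat.one_le_pow _ _ (by omega)
    have h2 : K * B + 1 ≤ B + (a' + 1) := by
      have hKt : K * t = K * B + K := by rw [← hBt]; ring
      linarith
    calc K * B ^ (a' + 1) = (K * B) * B ^ a' := by ring
      _ < (B + (a' + 1)) * B ^ a' := by nlinarith [h2, hBp]
      _ = B ^ (a' + 1) + (a' + 1) * B ^ a' := by ring
      _ ≤ t ^ (a' + 1) := hb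
  refine ⟨(K * t + 1) * m + δ + 1, Nat.lt_succ_of_le (Nat.le_add_left _ _), ?_⟩
  intro k hk
  obtain ⟨n, rfl⟩ : ∃ n, k = n + 1 := ⟨k - 1, by omega⟩
  set a := n / m with hadef
  set r := n % m with hrdef
  have hnr : n = r + a * m := (Nat.mod_add_div' n m).symm
  have hrm : r < m := Nat.mod_lt _ (by omega)
  have haK : K * t ≤ a := by
    rw [hadef, Nat.le_div_iff_mul_le (by omega : 0 < m)]
    have h1 : K * t * m ≤ (K * t + 1) * m := Nat.mul_le_mul_right _ (Nat.le_succ _)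
    have h2 : (K * t + 1) * m + δ ≤ n := Nat.le_of_succ_le_succ hk
    have h3 : (K * t + 1) * m ≤ n := le_trans (Nat.le_add_right _ δ) h2
    exact le_trans h1 h3
  have hW : ∀ u : β, W H n u ≤ Δ ^ r * B ^ a := by
    intro u
    calc W H n u = W H (r + a * m) u := by rw [← hnr]
      _ ≤ W H r u * B ^ a := W_blocks H hB r a u
      _ ≤ Δ ^ r * B ^ a := Nat.mul_le_mul_right _ (W_le_pow H hcard_le r u)
  have hhom : homCount (SimpleGraph.pathGraph (n + 1)) H ≤ Fintype.card β * (Δ ^ r * B ^ a) := by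
    calc homCount (SimpleGraph.pathGraph (n + 1)) H ≤ ∑ u, W H n u := homCount_le H n
      _ ≤ ∑ _u : β, Δ ^ r * B ^ a := Finset.sum_le_sum fun u _ => hW u
      _ = Fintype.card β * (Δ ^ r * B ^ a) := by
          rw [Finset.sum_const, smul_eq_mul, Finset.card_univ]
  have hδk : δ ≤ n + 1 := by omega
  have hfin : homCount (SimpleGraph.pathGraph (n + 1)) H * Δ ^ δ < Δ ^ (n + 1 - δ) * Δ ^ δ := by
    have h1 : homCount (SimpleGraph.pathGraph (n + 1)) H * Δ ^ δ
        ≤ (K * B ^ a) * Δ ^ r := by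
      calc homCount (SimpleGraph.pathGraph (n + 1)) H * Δ ^ δ
          ≤ (Fintype.card β * (Δ ^ r * B ^ a)) * Δ ^ δ := Nat.mul_le_mul_right _ hhom
        _ = (K * B ^ a) * Δ ^ r := by rw [hKdef]; ring
    have h3 : (K * B ^ a) * Δ ^ r < t ^ a * Δ ^ r :=
      (Nat.mul_lt_mul_right (Nat.pow_pos (n := r) (by omega))).2 (hkey a haK)
    have h4 : t ^ a * Δ ^ r = Δ ^ n := by
      rw [htdef, ← pow_mul, ← pow_add]
      congr 1
      rw [hnr]; ring
    have h5 : Δ ^ n ≤ Δ ^ ((n + 1 - δ) + δ) := by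
      apply Nat.pow_le_pow_right (by omega)
      omega
    rw [← pow_add]
    omega
  exact Nat.lt_of_mul_lt_mul_right hfin
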